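/- arXiv:1308.1566 — 2 statements merged into one kernel-verified Lean document; each statement's English description precedes it below -/
import Mathlib

section
/- Set f̃(x, t) := (x⁵ − 95x⁴ − 110x³ − 150x² − 75x − 3)³·(x⁵ + 4x⁴ − 38x³ + 56x² + 53x − 4)³·(x − 3) − t·(x² − 6x − 1)⁸·(x² − x − 1)⁴·(x + 2)⁴·x. Then f̃, viewed as a polynomial of degree 31 in x, is irreducible over the rational function field ℚ(t). -/
/-!
Statement 3: the polynomial
`f̃(x, t) = (x⁵ − 95x⁴ − 110x³ − 150x² − 75x − 3)³·(x⁵ + 4x⁴ − 38x³ + 56x² + 53x − 4)³·(x − 3)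
  − t·(x² − 6x − 1)⁸·(x² − x − 1)⁴·(x + 2)⁴·x`,
viewed as a polynomial of degree 31 in `x`, is irreducible over `ℚ(t)`.
We model `ℚ(t)` as `RatFunc ℚ`, with `t = RatFunc.X` a transcendental over `ℚ`.
-/

open Polynomial

namespace PSL52Family

/-- The polynomial `f̃(x, t)` over `ℚ(t)`. -/
noncomputable def fTilde : Polynomial (RatFunc ℚ) :=
  (X^5 - 95*X^4 - 110*X^3 - 150*X^2 - 75*X - 3)^3 *
    (X^5 + 4*X^4 - 38*X^3 + 56*X^2 + 53*X - 4)^3 * (X - 3)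
  - C RatFunc.X * (X^2 - 6*X - 1)^8 * (X^2 - X - 1)^4 * (X + 2)^4 * X

/-! ### Auxiliary definitions -/

/-- `A(x)`, the part of `f̃` not involving `t`. -/
noncomputable def Apoly : ℚ[X] :=
  (X^5 - 95*X^4 - 110*X^3 - 150*X^2 - 75*X - 3)^3 *
    (X^5 + 4*X^4 - 38*X^3 + 56*X^2 + 53*X - 4)^3 * (X - 3)

/-- `B(x)`, the coefficient of `-t` in `f̃`. -/
noncomputable def Bpoly : ℚ[X] :=
  (X^2 - 6*X - 1)^8 * (X^2 - X - 1)^4 * (X + 2)^4 * X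

/-! ### Coprimality of `A` and `B` -/

lemma isCoprime_of_bezout (u v : ℚ[X]) (d : ℚ) (hd : d ≠ 0) {a b : ℚ[X]}
    (h : u * a + v * b = C d) : IsCoprime a b := by
  refine ⟨C d⁻¹ * u, C d⁻¹ * v, ?_⟩
  rw [mul_assoc, mul_assoc, ← mul_add, h, ← C_mul, inv_mul_cancel₀ hd, C_1]

lemma cop_pr : IsCoprime (X^5 - 95*X^4 - 110*X^3 - 150*X^2 - 75*X - 3 : ℚ[X]) (X^2 - 6*X - 1) :=
  isCoprime_of_bezout ((1559) + (-253)*X) ((-13677) + (-34104)*X + (-23928)*X^2 + (-24076)*X^3 + (253)*X^4) 9000 (by norm_num) (by simp only [map_ofNat]; ring)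

lemma cop_ps : IsCoprime (X^5 - 95*X^4 - 110*X^3 - 150*X^2 - 75*X - 3 : ℚ[X]) (X^2 - X - 1) :=
  isCoprime_of_bezout ((-47) + (29)*X) ((16) + (3422)*X + (1469)*X^2 + (2773)*X^3 + (-29)*X^4) 125 (by norm_num) (by simp only [map_ofNat]; ring)

lemma cop_pm : IsCoprime (X^5 - 95*X^4 - 110*X^3 - 150*X^2 - 75*X - 3 : ℚ[X]) (X + 2) :=
  isCoprime_of_bezout ((-1)) ((561) + (-318)*X + (84)*X^2 + (-97)*X^3 + (1)*X^4) 1125 (by norm_num) (by simp only [map_ofNat]; ring)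

lemma cop_px : IsCoprime (X^5 - 95*X^4 - 110*X^3 - 150*X^2 - 75*X - 3 : ℚ[X]) (X) :=
  isCoprime_of_bezout ((-1)) ((-75) + (-150)*X + (-110)*X^2 + (-95)*X^3 + (1)*X^4) 3 (by norm_num) (by simp only [map_ofNat]; ring)

lemma cop_qr : IsCoprime (X^5 + 4*X^4 - 38*X^3 + 56*X^2 + 53*X - 4 : ℚ[X]) (X^2 - 6*X - 1) :=
  isCoprime_of_bezout ((-80) + (13)*X) ((-580) + (-812)*X + (501)*X^2 + (-50)*X^3 + (-13)*X^4) 900 (by norm_num) (by simp only [map_ofNat]; ring)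

lemma cop_qs : IsCoprime (X^5 + 4*X^4 - 38*X^3 + 56*X^2 + 53*X - 4 : ℚ[X]) (X^2 - X - 1) :=
  isCoprime_of_bezout ((-3) + (2)*X) ((-13) + (-154)*X + (79)*X^2 + (-7)*X^3 + (-2)*X^4) 25 (by norm_num) (by simp only [map_ofNat]; ring)

lemma cop_qm : IsCoprime (X^5 + 4*X^4 - 38*X^3 + 56*X^2 + 53*X - 4 : ℚ[X]) (X + 2) :=
  isCoprime_of_bezout ((1)) ((227) + (-140)*X + (42)*X^2 + (-2)*X^3 + (-1)*X^4) 450 (by norm_num) (by simp only [map_ofNat]; ring)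

lemma cop_qx : IsCoprime (X^5 + 4*X^4 - 38*X^3 + 56*X^2 + 53*X - 4 : ℚ[X]) (X) :=
  isCoprime_of_bezout ((-1)) ((53) + (56)*X + (-38)*X^2 + (4)*X^3 + (1)*X^4) 4 (by norm_num) (by simp only [map_ofNat]; ring)

lemma cop_lr : IsCoprime (X - 3 : ℚ[X]) (X^2 - 6*X - 1) :=
  isCoprime_of_bezout ((-3) + (1)*X) ((-1)) 10 (by norm_num) (by simp only [map_ofNat]; ring)

lemma cop_ls : IsCoprime (X - 3 : ℚ[X]) (X^2 - X - 1) :=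
  isCoprime_of_bezout ((-2) + (-1)*X) ((1)) 5 (by norm_num) (by simp only [map_ofNat]; ring)

lemma cop_lm : IsCoprime (X - 3 : ℚ[X]) (X + 2) :=
  isCoprime_of_bezout ((-1)) ((1)) 5 (by norm_num) (by simp only [map_ofNat]; ring)

lemma cop_lx : IsCoprime (X - 3 : ℚ[X]) (X) :=
  isCoprime_of_bezout ((-1)) ((1)) 3 (by norm_num) (by simp only [map_ofNat]; ring)

lemma cop_AB : IsCoprime Apoly Bpoly := by
  unfold Apoly Bpoly
  refine IsCoprime.mul_left (IsCoprime.mul_left ?_ ?_) ?_ <;>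
  · refine IsCoprime.mul_right (IsCoprime.mul_right (IsCoprime.mul_right ?_ ?_) ?_) ?_ <;>
    first
      | with_reducible exact (cop_pr.pow)
      | with_reducible exact (cop_ps.pow)
      | with_reducible exact (cop_pm.pow)
      | with_reducible exact cop_pr.pow_left.pow_right
      | with_reducible exact cop_ps.pow_left.pow_right
      | with_reducible exact cop_pm.pow_left.pow_right
      | with_reducible exact cop_px.pow_left
      | with_reducible exact cop_qr.pow_left.pow_right
      | with_reducible exact cop_qs.pow_left.pow_right
      | with_reducible exact cop_qm.pow_left.pow_right
      | with_reducible exact cop_qx.pow_left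
      | with_reducible exact cop_lr.pow_right
      | with_reducible exact cop_ls.pow_right
      | with_reducible exact cop_lm.pow_right
      | with_reducible exact cop_lx

/-! ### Monicity and degrees -/

lemma monic_A : Apoly.Monic := by unfold Apoly; monicity!

lemma monic_B : Bpoly.Monic := by unfold Bpoly; monicity!

lemma natDegree_A : Apoly.natDegree = 31 := by unfold Apoly; compute_degree!

lemma degree_B_le : Bpoly.degree ≤ 29 := by unfold Bpoly; compute_degree

/-! ### Irreducibility of `C A - C B * X` (a degree-one polynomial in `t`) -/

lemma irreducible_linear {R : Type*} [CommRing R] [IsDomain R] {a b : R}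
    (hab : IsCoprime a b) (hb : b ≠ 0) : Irreducible (C a - C b * X : R[X]) := by
  set h : R[X] := C a - C b * X with hh
  have hc1 : h.coeff 1 = -b := by simp [hh, coeff_C]
  have hc0 : h.coeff 0 = a := by simp [hh, coeff_C]
  have hdeg : h.natDegree = 1 := by
    refine le_antisymm ?_ ?_
    · refine (natDegree_sub_le _ _).trans ?_
      simp only [natDegree_C, max_le_iff]
      constructor
      · omega
      · exact (natDegree_mul_le).trans (by simp)
    · exact le_natDegree_of_ne_zero (by rw [hc1]; exact neg_ne_zero.mpr hb)
  have hne : h ≠ 0 := fun h0 => by simp [h0] at hdeg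
  have key : ∀ u : R[X], u ∣ h → u.natDegree = 0 → IsUnit u := by
    intro u hu hdu
    have hu0 : u ≠ 0 := fun h0 => hne (by simpa [h0] using hu)
    obtain ⟨c, rfl⟩ : ∃ c, u = C c := ⟨u.coeff 0, (eq_C_of_natDegree_eq_zero hdu)⟩
    rw [C_dvd_iff_dvd_coeff] at hu
    have h1 := hu 1
    have h0 := hu 0
    rw [hc1] at h1; rw [hc0] at h0
    exact isUnit_C.mpr (hab.isUnit_of_dvd' h0 ((dvd_neg).mp h1))
  constructor
  · intro hu
    have := natDegree_eq_zero_of_isUnit hu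
    omega
  · intro u v huv
    have hu0 : u ≠ 0 := fun h0 => hne (by rw [huv, h0, zero_mul])
    have hv0 : v ≠ 0 := fun h0 => hne (by rw [huv, h0, mul_zero])
    have hsum : u.natDegree + v.natDegree = 1 := by
      rw [← natDegree_mul hu0 hv0, ← huv, hdeg]
    rcases Nat.eq_zero_or_pos u.natDegree with h0 | hpos
    · exact Or.inl (key u ⟨v, huv⟩ h0)
    · exact Or.inr (key v ⟨u, by rw [huv, mul_comm]⟩ (by omega))

/-! ### The variable-swap ring equivalence on `ℚ[x][t]` -/

/-- The ring homomorphism `ℚ[x][t] → ℚ[t][x]` swapping the two variables. -/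
noncomputable def swapHom : (ℚ[X])[X] →+* (ℚ[X])[X] :=
  eval₂RingHom (mapRingHom (C : ℚ →+* ℚ[X])) (C X)

lemma swapHom_C (p : ℚ[X]) : swapHom (C p) = p.map C := by
  simp [swapHom]

lemma swapHom_X : swapHom (X : (ℚ[X])[X]) = C X := by
  simp [swapHom]

lemma swapHom_comp : swapHom.comp swapHom = RingHom.id _ := by
  apply Polynomial.ringHom_ext
  · intro a
    have : (swapHom.comp swapHom).comp (C : ℚ[X] →+* (ℚ[X])[X]) =
        (C : ℚ[X] →+* (ℚ[X])[X]) := by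
      apply Polynomial.ringHom_ext
      · intro q
        simp [swapHom_C]
      · simp [swapHom_C, swapHom_X]
    exact DFunLike.congr_fun this a
  · simp [swapHom_C, swapHom_X]

/-- The variable-swap as a ring equivalence. -/
noncomputable def swapEquiv : (ℚ[X])[X] ≃+* (ℚ[X])[X] :=
  RingEquiv.ofRingHom swapHom swapHom swapHom_comp swapHom_comp

/-! ### The main theorem -/

/-- The model of `f̃` over `ℚ[t]`, monic of degree 31 in `x`. -/
noncomputable def gPoly : (ℚ[X])[X] := Apoly.map C - Bpoly.map C * C X

lemma gPoly_eq_swap : gPoly = swapEquiv (C Apoly - C Bpoly * X) := by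
  show gPoly = swapHom _
  rw [map_sub, map_mul, swapHom_C, swapHom_C, swapHom_X, gPoly]

lemma irreducible_g : Irreducible gPoly := by
  rw [gPoly_eq_swap]
  rw [MulEquiv.irreducible_iff]
  exact irreducible_linear cop_AB monic_B.ne_zero

lemma degree_mapA : (Apoly.map (C : ℚ →+* ℚ[X])).degree = 31 := by
  rw [degree_map_eq_of_injective (C_injective), degree_eq_natDegree monic_A.ne_zero,
    natDegree_A]
  rfl

lemma degree_lt_aux : (Bpoly.map (C : ℚ →+* ℚ[X]) * C X).degree <
    (Apoly.map (C : ℚ →+* ℚ[X])).degree := by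
  rw [degree_mapA]
  refine lt_of_le_of_lt (degree_mul_le _ _) ?_
  have h1 : (Bpoly.map (C : ℚ →+* ℚ[X])).degree ≤ 29 :=
    le_trans (degree_map_le) degree_B_le
  have h2 : (C (X : ℚ[X]) : (ℚ[X])[X]).degree ≤ 0 := degree_C_le
  calc (Bpoly.map (C : ℚ →+* ℚ[X])).degree + (C (X : ℚ[X]) : (ℚ[X])[X]).degree
      ≤ 29 + 0 := add_le_add h1 h2
    _ < 31 := by norm_num

lemma monic_g : gPoly.Monic := by
  rw [gPoly, sub_eq_add_neg]
  apply Monic.add_of_left (monic_A.map C)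
  rw [degree_neg]
  exact degree_lt_aux

lemma natDegree_g : gPoly.natDegree = 31 := by
  have : gPoly.degree = 31 := by
    rw [gPoly, degree_sub_eq_left_of_degree_lt degree_lt_aux, degree_mapA]
  exact natDegree_eq_of_degree_eq_some this

lemma fTilde_eq_map : fTilde = gPoly.map (algebraMap ℚ[X] (RatFunc ℚ)) := by
  rw [gPoly, Apoly, Bpoly, fTilde]
  simp only [Polynomial.map_sub, Polynomial.map_mul, Polynomial.map_pow, Polynomial.map_add,
    Polynomial.map_X, Polynomial.map_C, Polynomial.map_ofNat, Polynomial.map_one,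
    map_ofNat, RatFunc.algebraMap_X]
  ring

/-- The polynomial `f̃(x, t)`, of degree 31 in `x`, is irreducible over
`ℚ(t)`. -/
theorem fTilde_irreducible :
    fTilde.natDegree = 31 ∧ Irreducible fTilde := by
  constructor
  · rw [fTilde_eq_map, monic_g.natDegree_map, natDegree_g]
  · rw [fTilde_eq_map]
    exact (monic_g.irreducible_iff_irreducible_map_fraction_map).mp irreducible_g

end PSL52Family
end

section
/- For every invertible matrix g ∈ GL₅(𝔽₂), the number of 1-dimensional subspaces of 𝔽₂⁵ fixed (setwise) by g equals the number of 4-dimensional subspaces (hyperplanes) of 𝔽₂⁵ fixed (setwise) by g. Consequently, the two transitive actions of PSL₅(𝔽₂) ≅ GL₅(𝔽₂) on 31 points — on the projective points and on the hyperplanes of PG(4, 2) — are arithmetically equivalent: every group element has the same number of fixed points in both actions. -/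
/-!
Statement 9: for every `g ∈ GL₅(𝔽₂)`, the number of 1-dimensional subspaces of `𝔽₂⁵` fixed
setwise by `g` equals the number of 4-dimensional subspaces (hyperplanes) fixed setwise
by `g`. Consequently the two transitive degree-31 actions of `PSL₅(𝔽₂) ≅ GL₅(𝔽₂)`, on the
points and on the hyperplanes of `PG(4, 2)`, are arithmetically equivalent: every group
element has the same number of fixed points in both actions.
Since the center of `SL₅(𝔽₂)` is trivial and every matrix over `𝔽₂` has determinant 1, we
model `PSL₅(𝔽₂)` as `GL (Fin 5) (ZMod 2)`, acting on submodules of `Fin 5 → ZMod 2` via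
`Submodule.map` of the associated linear map.
-/

open Submodule Module LinearMap

private lemma zmod2_eq_one {c : ZMod 2} (h : c ≠ 0) : c = 1 := by revert c; decide

private lemma dual_eq_of_ker_eq (φ ψ : Module.Dual (ZMod 2) (Fin 5 → ZMod 2)) (hφ : φ ≠ 0)
    (h : LinearMap.ker φ = LinearMap.ker ψ) : ψ = φ := by
  obtain ⟨v, hv⟩ : ∃ v, φ v ≠ 0 := by
    by_contra h'; push_neg at h'; exact hφ (LinearMap.ext fun w => h' w)
  have hφv : φ v = 1 := zmod2_eq_one hv
  have hψv : ψ v = 1 := by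
    have hvk : v ∉ LinearMap.ker ψ := by rw [← h, LinearMap.mem_ker]; exact hv
    exact zmod2_eq_one (by simpa [LinearMap.mem_ker] using hvk)
  refine LinearMap.ext fun w => ?_
  have hw : w - φ w • v ∈ LinearMap.ker φ := by
    simp [LinearMap.mem_ker, hφv]
  have hw' : ψ (w - φ w • v) = 0 := by rw [← LinearMap.mem_ker, ← h]; exact hw
  simp only [map_sub, map_smul, smul_eq_mul, hψv, mul_one, sub_eq_zero] at hw'
  simp [hw']

private lemma lines_eq_image (f : (Fin 5 → ZMod 2) →ₗ[ZMod 2] (Fin 5 → ZMod 2))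
    (hf : Function.Injective f) :
    {L : Submodule (ZMod 2) (Fin 5 → ZMod 2) | Module.finrank (ZMod 2) ↥L = 1 ∧ L.map f = L} =
      (fun v => Submodule.span (ZMod 2) {v}) '' {v | v ≠ 0 ∧ f v = v} := by
  ext L
  constructor
  · rintro ⟨h1, h2⟩
    have hL : L ≠ ⊥ := by
      intro hb; rw [hb] at h1; simp at h1
    obtain ⟨v, hvL, hv0⟩ := Submodule.exists_mem_ne_zero_of_ne_bot hL
    have hspan : Submodule.span (ZMod 2) {v} = L := by
      apply Submodule.eq_of_le_of_finrank_eq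
      · rwa [Submodule.span_singleton_le_iff_mem]
      · rw [finrank_span_singleton hv0, h1]
    have hfv : f v ∈ L := by
      rw [← h2]; exact Submodule.mem_map_of_mem hvL
    rw [← hspan, Submodule.mem_span_singleton] at hfv
    obtain ⟨c, hc⟩ := hfv
    have hc0 : c ≠ 0 := by
      rintro rfl; rw [zero_smul] at hc
      exact hv0 (hf (by rw [← hc, map_zero]))
    rw [zmod2_eq_one hc0, one_smul] at hc
    exact ⟨v, ⟨hv0, hc.symm⟩, hspan⟩
  · rintro ⟨v, ⟨hv0, hfv⟩, rfl⟩
    refine ⟨finrank_span_singleton hv0, ?_⟩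
    rw [Submodule.map_span, Set.image_singleton, hfv]

private lemma span_injOn (f : (Fin 5 → ZMod 2) →ₗ[ZMod 2] (Fin 5 → ZMod 2)) :
    Set.InjOn (fun v => Submodule.span (ZMod 2) {v}) {v | v ≠ 0 ∧ f v = v} := by
  rintro v ⟨hv0, -⟩ w ⟨hw0, -⟩ h
  simp only at h
  have hv : v ∈ Submodule.span (ZMod 2) {w} := h ▸ Submodule.mem_span_singleton_self v
  rw [Submodule.mem_span_singleton] at hv
  obtain ⟨c, hc⟩ := hv
  have hc0 : c ≠ 0 := by rintro rfl; rw [zero_smul] at hc; exact hv0 hc.symm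
  rw [zmod2_eq_one hc0, one_smul] at hc; exact hc.symm

private lemma ker_finrank_four (φ : Module.Dual (ZMod 2) (Fin 5 → ZMod 2)) (hφ : φ ≠ 0) :
    Module.finrank (ZMod 2) ↥(LinearMap.ker φ) = 4 := by
  have h := LinearMap.finrank_range_add_finrank_ker φ
  have hr : Module.finrank (ZMod 2) ↥(LinearMap.range φ) = 1 := by
    have hle : Module.finrank (ZMod 2) ↥(LinearMap.range φ) ≤ 1 :=
      le_trans (Submodule.finrank_le _) (by simp [Module.finrank_self])
    have hne : LinearMap.range φ ≠ ⊥ := by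
      rw [Ne, LinearMap.range_eq_bot]; exact hφ
    have hpos : Module.finrank (ZMod 2) ↥(LinearMap.range φ) ≠ 0 := by
      intro h0; exact hne (Submodule.finrank_eq_zero.mp h0)
    omega
  rw [hr] at h
  have h5 : Module.finrank (ZMod 2) (Fin 5 → ZMod 2) = 5 := by simp
  omega

private lemma exists_ker_eq (W : Submodule (ZMod 2) (Fin 5 → ZMod 2))
    (hW : Module.finrank (ZMod 2) ↥W = 4) :
    ∃ φ : Module.Dual (ZMod 2) (Fin 5 → ZMod 2), φ ≠ 0 ∧ LinearMap.ker φ = W := by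
  have hq : Module.finrank (ZMod 2) ((Fin 5 → ZMod 2) ⧸ W) = 1 := by
    have := Submodule.finrank_quotient_add_finrank W
    have h5 : Module.finrank (ZMod 2) (Fin 5 → ZMod 2) = 5 := by simp
    omega
  let b : Basis (Fin 1) (ZMod 2) ((Fin 5 → ZMod 2) ⧸ W) := Module.finBasisOfFinrankEq _ _ hq
  refine ⟨(b.coord 0).comp W.mkQ, ?_, ?_⟩
  · intro h0
    have hb0 : b.coord 0 (b 0) = 1 := by simp
    obtain ⟨x, hx⟩ := W.mkQ_surjective (b 0)
    have := LinearMap.congr_fun h0 x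
    simp only [LinearMap.comp_apply, hx, LinearMap.zero_apply] at this
    rw [this] at hb0
    exact one_ne_zero hb0.symm
  · ext x
    simp only [LinearMap.mem_ker, LinearMap.comp_apply]
    constructor
    · intro hx
      have hrep : W.mkQ x = b.coord 0 (W.mkQ x) • b 0 := by
        conv_lhs => rw [← b.sum_repr (W.mkQ x)]
        simp [Basis.coord]
      rw [hx, zero_smul] at hrep
      rwa [← Submodule.Quotient.mk_eq_zero W, ← Submodule.mkQ_apply]
    · intro hx
      have hz : W.mkQ x = 0 := (Submodule.Quotient.mk_eq_zero W).mpr hx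
      rw [hz, map_zero]

private lemma hyperplanes_eq_image (f : (Fin 5 → ZMod 2) →ₗ[ZMod 2] (Fin 5 → ZMod 2))
    (hf : Function.Injective f) :
    {W : Submodule (ZMod 2) (Fin 5 → ZMod 2) | Module.finrank (ZMod 2) ↥W = 4 ∧ W.map f = W} =
      (fun φ : Module.Dual (ZMod 2) (Fin 5 → ZMod 2) => LinearMap.ker φ) ''
        {φ | φ ≠ 0 ∧ φ.comp f = φ} := by
  ext W
  constructor
  · rintro ⟨h4, hmap⟩
    obtain ⟨φ, hφ0, hker⟩ := exists_ker_eq W h4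
    subst hker
    refine ⟨φ, ⟨hφ0, ?_⟩, rfl⟩
    have hkc : LinearMap.ker φ = LinearMap.ker (φ.comp f) := by
      ext v
      simp only [LinearMap.mem_ker, LinearMap.comp_apply]
      constructor
      · intro hv
        have h' : f v ∈ Submodule.map f (LinearMap.ker φ) :=
          Submodule.mem_map_of_mem (LinearMap.mem_ker.mpr hv)
        rw [hmap] at h'
        exact h'
      · intro hv
        have h' : f v ∈ Submodule.map f (LinearMap.ker φ) := by
          rw [hmap]; exact LinearMap.mem_ker.mpr hv
        obtain ⟨w, hw, hfw⟩ := h'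
        have hwv : w = v := hf hfw
        subst hwv
        exact hw
    exact dual_eq_of_ker_eq φ (φ.comp f) hφ0 hkc
  · rintro ⟨φ, ⟨hφ0, hcomp⟩, rfl⟩
    refine ⟨ker_finrank_four φ hφ0, ?_⟩
    apply Submodule.eq_of_le_of_finrank_eq
    · rintro x ⟨v, hv, rfl⟩
      rw [LinearMap.mem_ker, ← LinearMap.comp_apply, hcomp]
      exact hv
    · have hsurj : Function.Surjective f := (LinearMap.injective_iff_surjective).mp hf
      exact LinearEquiv.finrank_map_eq (LinearEquiv.ofBijective f ⟨hf, hsurj⟩) _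

private lemma ker_injOn (f : (Fin 5 → ZMod 2) →ₗ[ZMod 2] (Fin 5 → ZMod 2)) :
    Set.InjOn (fun φ : Module.Dual (ZMod 2) (Fin 5 → ZMod 2) => LinearMap.ker φ)
      {φ | φ ≠ 0 ∧ φ.comp f = φ} := by
  rintro φ ⟨hφ0, -⟩ ψ ⟨hψ0, -⟩ h
  exact (dual_eq_of_ker_eq φ ψ hφ0 h).symm

private lemma ncard_eigen (f : (Fin 5 → ZMod 2) →ₗ[ZMod 2] (Fin 5 → ZMod 2)) :
    {v : Fin 5 → ZMod 2 | v ≠ 0 ∧ f v = v}.ncard =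
      2 ^ Module.finrank (ZMod 2) ↥(LinearMap.ker (f - LinearMap.id)) - 1 := by
  classical
  have hset : {v : Fin 5 → ZMod 2 | v ≠ 0 ∧ f v = v} =
      (LinearMap.ker (f - LinearMap.id) : Set (Fin 5 → ZMod 2)) \ {0} := by
    ext v
    simp only [Set.mem_setOf_eq, Set.mem_diff, SetLike.mem_coe, LinearMap.mem_ker,
      LinearMap.sub_apply, LinearMap.id_apply, sub_eq_zero, Set.mem_singleton_iff]
    tauto
  rw [hset, Set.ncard_diff_singleton_of_mem (by simp : (0 : Fin 5 → ZMod 2) ∈ _)]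
  congr 1
  rw [← Nat.card_coe_set_eq]
  have : Fintype ↥(LinearMap.ker (f - LinearMap.id)) := Fintype.ofFinite _
  rw [show (Nat.card ↥((LinearMap.ker (f - LinearMap.id) : Set (Fin 5 → ZMod 2)))) =
      Nat.card ↥(LinearMap.ker (f - LinearMap.id)) from rfl,
    Nat.card_eq_fintype_card, Module.card_eq_pow_finrank (K := ZMod 2), ZMod.card]

private lemma ncard_eigen_dual (f : (Fin 5 → ZMod 2) →ₗ[ZMod 2] (Fin 5 → ZMod 2)) :
    {φ : Module.Dual (ZMod 2) (Fin 5 → ZMod 2) | φ ≠ 0 ∧ φ.comp f = φ}.ncard =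
      2 ^ Module.finrank (ZMod 2) ↥(LinearMap.ker (f.dualMap - LinearMap.id)) - 1 := by
  classical
  have : Finite (Module.Dual (ZMod 2) (Fin 5 → ZMod 2)) :=
    Finite.of_injective _ (DFunLike.coe_injective (F := Module.Dual (ZMod 2) (Fin 5 → ZMod 2)))
  have hset : {φ : Module.Dual (ZMod 2) (Fin 5 → ZMod 2) | φ ≠ 0 ∧ φ.comp f = φ} =
      (LinearMap.ker (f.dualMap - LinearMap.id) :
        Set (Module.Dual (ZMod 2) (Fin 5 → ZMod 2))) \ {0} := by
    ext φ
    simp only [Set.mem_setOf_eq, Set.mem_diff, SetLike.mem_coe, LinearMap.mem_ker,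
      LinearMap.sub_apply, LinearMap.id_apply, sub_eq_zero, Set.mem_singleton_iff,
      LinearMap.dualMap_apply']
    tauto
  rw [hset, Set.ncard_diff_singleton_of_mem (by simp : (0 : Module.Dual (ZMod 2) _) ∈ _)]
  congr 1
  rw [← Nat.card_coe_set_eq]
  have : Fintype ↥(LinearMap.ker (f.dualMap - LinearMap.id)) := Fintype.ofFinite _
  rw [show (Nat.card ↥((LinearMap.ker (f.dualMap - LinearMap.id) :
        Set (Module.Dual (ZMod 2) (Fin 5 → ZMod 2))))) =
      Nat.card ↥(LinearMap.ker (f.dualMap - LinearMap.id)) from rfl,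
    Nat.card_eq_fintype_card, Module.card_eq_pow_finrank (K := ZMod 2), ZMod.card]

private lemma finrank_ker_dual_eq (f : (Fin 5 → ZMod 2) →ₗ[ZMod 2] (Fin 5 → ZMod 2)) :
    Module.finrank (ZMod 2) ↥(LinearMap.ker (f.dualMap - LinearMap.id)) =
      Module.finrank (ZMod 2) ↥(LinearMap.ker (f - LinearMap.id)) := by
  have hd : f.dualMap - LinearMap.id = (f - LinearMap.id).dualMap := by
    ext φ v
    simp [LinearMap.dualMap_apply']
  rw [hd]
  have h1 := LinearMap.finrank_range_add_finrank_ker (f - LinearMap.id)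
  have h2 := LinearMap.finrank_range_add_finrank_ker (f - LinearMap.id).dualMap
  have h3 := LinearMap.finrank_range_dualMap_eq_finrank_range (f - LinearMap.id)
  have h4 : Module.finrank (ZMod 2) (Module.Dual (ZMod 2) (Fin 5 → ZMod 2)) =
      Module.finrank (ZMod 2) (Fin 5 → ZMod 2) := Subspace.dual_finrank_eq
  omega


/-- For every `g ∈ GL₅(𝔽₂)`, the number of 1-dimensional subspaces of `𝔽₂⁵`
fixed (setwise) by `g` equals the number of 4-dimensional subspaces of `𝔽₂⁵` fixed (setwise)
by `g`; i.e. the two degree-31 actions of `PSL₅(𝔽₂) ≅ GL₅(𝔽₂)` on the points and on the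
hyperplanes of `PG(4, 2)` are arithmetically equivalent. -/
theorem card_fixed_lines_eq_card_fixed_hyperplanes
    (g : Matrix.GeneralLinearGroup (Fin 5) (ZMod 2)) :
    {L : Submodule (ZMod 2) (Fin 5 → ZMod 2) | Module.finrank (ZMod 2) ↥L = 1 ∧
      L.map (Matrix.mulVecLin (g : Matrix (Fin 5) (Fin 5) (ZMod 2))) = L}.ncard =
    {W : Submodule (ZMod 2) (Fin 5 → ZMod 2) | Module.finrank (ZMod 2) ↥W = 4 ∧
      W.map (Matrix.mulVecLin (g : Matrix (Fin 5) (Fin 5) (ZMod 2))) = W}.ncard := by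
  have hf : Function.Injective (Matrix.mulVecLin (g : Matrix (Fin 5) (Fin 5) (ZMod 2))) := by
    intro a b hab
    apply (Matrix.GeneralLinearGroup.toLin g).toLinearEquiv.injective
    change Matrix.mulVecLin (g : Matrix (Fin 5) (Fin 5) (ZMod 2)) a =
      Matrix.mulVecLin (g : Matrix (Fin 5) (Fin 5) (ZMod 2)) b
    exact hab
  rw [lines_eq_image _ hf, hyperplanes_eq_image _ hf,
    Set.ncard_image_of_injOn (span_injOn _), Set.ncard_image_of_injOn (ker_injOn _),
    ncard_eigen, ncard_eigen_dual, finrank_ker_dual_eq]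
end
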